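/- With ρ_μ^φ as above and P₂ the projector onto the total two-photon subspace spanned by {|0,2⟩, |1,1⟩, |2,0⟩}, one has Pr_μ(2)|Ψ₂^±⟩⟨Ψ₂^±| = P₂[ρ_μ^Z ± (½ρ_μ^0 + ½ρ_μ^π) ∓ (½ρ_μ^{π/2} + ½ρ_μ^{3π/2})]P₂, where |Ψ₂^±⟩ = (|0,2⟩±|2,0⟩)/√2, Pr_μ(2) = e^{-μ}μ²/2, and ρ_μ^Z = (1/2π)∫₀^{2π}[½|0⟩⟨0|⊗|√μe^{iθ}⟩⟨√μe^{iθ}| + ½|√μe^{iθ}⟩⟨√μe^{iθ}|⊗|0⟩⟨0|]dθ. -/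

import Mathlib

/-- The `n`-th Fock coefficient of the coherent state `|α⟩`. -/
noncomputable def coherentCoeff (α : ℂ) (n : ℕ) : ℂ :=
  Complex.exp (-((‖α‖ : ℂ)) ^ 2 / 2) * α ^ n / (Real.sqrt (Nat.factorial n) : ℂ)

/-- Fock coefficient of the vacuum. -/
noncomputable def vacCoeff (n : ℕ) : ℂ := if n = 0 then 1 else 0

/-- Fock-basis matrix element of `ρ_μ^φ`. -/
noncomputable def rhoPhiElem (μ φ : ℝ) (j k j' k' : ℕ) : ℂ :=
  (1 / (2 * (Real.pi : ℂ))) *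
    ∫ θ in (0:ℝ)..(2 * Real.pi),
      coherentCoeff (Real.sqrt (μ/2) * Complex.exp (Complex.I * θ)) j *
      (starRingEnd ℂ) (coherentCoeff (Real.sqrt (μ/2) * Complex.exp (Complex.I * θ)) j') *
      coherentCoeff (Real.sqrt (μ/2) * Complex.exp (Complex.I * (θ + φ))) k *
      (starRingEnd ℂ) (coherentCoeff (Real.sqrt (μ/2) * Complex.exp (Complex.I * (θ + φ))) k')

/-- Fock-basis matrix element of the phase-randomized `Z`-basis state `ρ_μ^Z`. -/
noncomputable def rhoZElem (μ : ℝ) (j k j' k' : ℕ) : ℂ :=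
  (1 / (2 * (Real.pi : ℂ))) *
    ∫ θ in (0:ℝ)..(2 * Real.pi),
      ((1 : ℂ)/2) *
        (vacCoeff j * (starRingEnd ℂ) (vacCoeff j') *
            coherentCoeff (Real.sqrt μ * Complex.exp (Complex.I * θ)) k *
            (starRingEnd ℂ) (coherentCoeff (Real.sqrt μ * Complex.exp (Complex.I * θ)) k')
          + coherentCoeff (Real.sqrt μ * Complex.exp (Complex.I * θ)) j *
            (starRingEnd ℂ) (coherentCoeff (Real.sqrt μ * Complex.exp (Complex.I * θ)) j') *
            vacCoeff k * (starRingEnd ℂ) (vacCoeff k'))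

/-- Indicator of the total `m`-photon subspace. -/
noncomputable def projElem (m j k : ℕ) : ℂ := if j + k = m then 1 else 0

/-- Fock coefficient of `|Ψ₂⁺⟩ = (|0,2⟩ + |2,0⟩)/√2`. -/
noncomputable def psi2Plus (j k : ℕ) : ℂ :=
  (1 / Real.sqrt 2 : ℝ) *
    ((if j = 0 ∧ k = 2 then 1 else 0) + (if j = 2 ∧ k = 0 then 1 else 0))

/-- Fock coefficient of `|Ψ₂⁻⟩ = (|0,2⟩ − |2,0⟩)/√2`. -/
noncomputable def psi2Minus (j k : ℕ) : ℂ :=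
  (1 / Real.sqrt 2 : ℝ) *
    ((if j = 0 ∧ k = 2 then 1 else 0) - (if j = 2 ∧ k = 0 then 1 else 0))

lemma cc_eq (r θ : ℝ) (hr : 0 ≤ r) (n : ℕ) :
    coherentCoeff ((r:ℂ) * Complex.exp (Complex.I * θ)) n
      = ((Real.exp (-(r^2)/2) * r^n / Real.sqrt n.factorial : ℝ) : ℂ) *
          Complex.exp (Complex.I * θ * n) := by
  have habs : ‖(r:ℂ) * Complex.exp (Complex.I * θ)‖ = r := by
    rw [norm_mul, Complex.norm_exp]
    simp [abs_of_nonneg hr]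
  unfold coherentCoeff
  rw [habs, mul_pow, ← Complex.exp_nat_mul,
    show ((n:ℂ) * (Complex.I * θ)) = Complex.I * θ * n by ring]
  push_cast
  ring

lemma cc_conj (r θ : ℝ) (hr : 0 ≤ r) (n : ℕ) :
    (starRingEnd ℂ) (coherentCoeff ((r:ℂ) * Complex.exp (Complex.I * θ)) n)
      = ((Real.exp (-(r^2)/2) * r^n / Real.sqrt n.factorial : ℝ) : ℂ) *
          Complex.exp (-(Complex.I * θ * n)) := by
  rw [cc_eq r θ hr n, map_mul, Complex.conj_ofReal, ← Complex.exp_conj]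
  congr 1
  simp [map_mul, Complex.conj_I, Complex.conj_ofReal]

lemma exp_pi_half : Complex.exp ((Real.pi:ℂ)/2 * Complex.I) = Complex.I := by
  rw [Complex.exp_mul_I, show ((Real.pi:ℂ)/2) = ((Real.pi/2 : ℝ):ℂ) by push_cast; ring,
      ← Complex.ofReal_cos, ← Complex.ofReal_sin, Real.cos_pi_div_two, Real.sin_pi_div_two]
  simp

lemma integrand_eq (μ φ : ℝ) (hμ : 0 ≤ μ) (j k j' k' : ℕ)
    (h : j + k = 2) (h' : j' + k' = 2) (θ : ℝ) :
    coherentCoeff ((Real.sqrt (μ/2) : ℝ) * Complex.exp (Complex.I * (θ:ℂ))) j *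
      (starRingEnd ℂ) (coherentCoeff ((Real.sqrt (μ/2) : ℝ) * Complex.exp (Complex.I * (θ:ℂ))) j') *
      coherentCoeff ((Real.sqrt (μ/2) : ℝ) * Complex.exp (Complex.I * ((θ + φ : ℝ):ℂ))) k *
      (starRingEnd ℂ) (coherentCoeff ((Real.sqrt (μ/2) : ℝ) * Complex.exp (Complex.I * ((θ + φ : ℝ):ℂ))) k')
      = ((Real.exp (-μ) * μ^2 / 4 /
            (Real.sqrt j.factorial * Real.sqrt k.factorial *
              Real.sqrt j'.factorial * Real.sqrt k'.factorial) : ℝ) : ℂ) *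
          Complex.exp (Complex.I * (φ:ℂ) * ((k:ℂ) - (k':ℂ))) := by
  rw [cc_eq _ _ (Real.sqrt_nonneg _) j, cc_conj _ _ (Real.sqrt_nonneg _) j',
      cc_eq _ _ (Real.sqrt_nonneg _) k, cc_conj _ _ (Real.sqrt_nonneg _) k']
  set s := Real.sqrt (μ/2) with hsdef
  have hs2 : s^2 = μ/2 := Real.sq_sqrt (by linarith)
  have hE : Real.exp (-(s^2)/2) * Real.exp (-(s^2)/2) *
      (Real.exp (-(s^2)/2) * Real.exp (-(s^2)/2)) = Real.exp (-μ) := by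
    rw [← Real.exp_add, ← Real.exp_add]
    congr 1
    rw [hs2]; ring
  have hss : s^j * s^k * (s^j' * s^k') = μ^2/4 := by
    rw [← pow_add, ← pow_add, h, h', hs2]; ring
  have hcoef : (Real.exp (-(s^2)/2) * s^j / Real.sqrt j.factorial) *
      (Real.exp (-(s^2)/2) * s^j' / Real.sqrt j'.factorial) *
      (Real.exp (-(s^2)/2) * s^k / Real.sqrt k.factorial) *
      (Real.exp (-(s^2)/2) * s^k' / Real.sqrt k'.factorial)
      = Real.exp (-μ) * μ^2 / 4 /
          (Real.sqrt j.factorial * Real.sqrt k.factorial *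
            Real.sqrt j'.factorial * Real.sqrt k'.factorial) := by
    have e1 : Real.exp (-(s^2)/2) * s^j / Real.sqrt j.factorial *
        (Real.exp (-(s^2)/2) * s^j' / Real.sqrt j'.factorial) *
        (Real.exp (-(s^2)/2) * s^k / Real.sqrt k.factorial) *
        (Real.exp (-(s^2)/2) * s^k' / Real.sqrt k'.factorial)
        = (Real.exp (-(s^2)/2) * Real.exp (-(s^2)/2) *
            (Real.exp (-(s^2)/2) * Real.exp (-(s^2)/2))) *
          (s^j * s^k * (s^j' * s^k')) /
          (Real.sqrt j.factorial * Real.sqrt k.factorial *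
            Real.sqrt j'.factorial * Real.sqrt k'.factorial) := by ring
    rw [e1, hE, hss]; ring
  have hcoefC : ((Real.exp (-(s^2)/2) * s^j / Real.sqrt j.factorial : ℝ) : ℂ) *
      ((Real.exp (-(s^2)/2) * s^j' / Real.sqrt j'.factorial : ℝ) : ℂ) *
      ((Real.exp (-(s^2)/2) * s^k / Real.sqrt k.factorial : ℝ) : ℂ) *
      ((Real.exp (-(s^2)/2) * s^k' / Real.sqrt k'.factorial : ℝ) : ℂ)
      = ((Real.exp (-μ) * μ^2 / 4 /
          (Real.sqrt j.factorial * Real.sqrt k.factorial *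
            Real.sqrt j'.factorial * Real.sqrt k'.factorial) : ℝ) : ℂ) := by
    exact_mod_cast congrArg (fun x : ℝ => (x : ℂ)) hcoef
  have hjc : (j:ℂ) + k = 2 := by exact_mod_cast congrArg (fun n : ℕ => (n:ℂ)) h
  have hjc' : (j':ℂ) + k' = 2 := by exact_mod_cast congrArg (fun n : ℕ => (n:ℂ)) h'
  have hexp : Complex.exp (Complex.I * (θ:ℂ) * j) * Complex.exp (-(Complex.I * (θ:ℂ) * j')) *
      Complex.exp (Complex.I * ((θ + φ:ℝ):ℂ) * k) *
      Complex.exp (-(Complex.I * ((θ + φ:ℝ):ℂ) * k'))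
      = Complex.exp (Complex.I * (φ:ℂ) * ((k:ℂ) - (k':ℂ))) := by
    rw [← Complex.exp_add, ← Complex.exp_add, ← Complex.exp_add]
    congr 1
    push_cast
    linear_combination (Complex.I * (θ:ℂ)) * (hjc - hjc')
  linear_combination
    (((Real.exp (-(s^2)/2) * s^j / Real.sqrt j.factorial : ℝ) : ℂ) *
      ((Real.exp (-(s^2)/2) * s^j' / Real.sqrt j'.factorial : ℝ) : ℂ) *
      ((Real.exp (-(s^2)/2) * s^k / Real.sqrt k.factorial : ℝ) : ℂ) *
      ((Real.exp (-(s^2)/2) * s^k' / Real.sqrt k'.factorial : ℝ) : ℂ)) * hexp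
    + Complex.exp (Complex.I * (φ:ℂ) * ((k:ℂ) - (k':ℂ))) * hcoefC

lemma rhoPhi_eq (μ φ : ℝ) (hμ : 0 ≤ μ) (j k j' k' : ℕ)
    (h : j + k = 2) (h' : j' + k' = 2) :
    rhoPhiElem μ φ j k j' k'
      = ((Real.exp (-μ) * μ^2 / 4 /
            (Real.sqrt j.factorial * Real.sqrt k.factorial *
              Real.sqrt j'.factorial * Real.sqrt k'.factorial) : ℝ) : ℂ) *
          Complex.exp (Complex.I * (φ:ℂ) * ((k:ℂ) - (k':ℂ))) := by
  unfold rhoPhiElem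
  simp only [← Complex.ofReal_add]
  rw [intervalIntegral.integral_congr
        (g := fun _ : ℝ => ((Real.exp (-μ) * μ^2 / 4 /
            (Real.sqrt j.factorial * Real.sqrt k.factorial *
              Real.sqrt j'.factorial * Real.sqrt k'.factorial) : ℝ) : ℂ) *
          Complex.exp (Complex.I * (φ:ℂ) * ((k:ℂ) - (k':ℂ))))
        (fun θ _ => integrand_eq μ φ hμ j k j' k' h h' θ),
      intervalIntegral.integral_const, sub_zero, Complex.real_smul]
  have hπ : (Real.pi : ℂ) ≠ 0 := by exact_mod_cast Real.pi_ne_zero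
  push_cast
  field_simp

lemma rhoZ_zero_int (μ : ℝ) (j k j' k' : ℕ) (h1 : ¬(j = 0 ∧ j' = 0)) (h2 : ¬(k = 0 ∧ k' = 0)) :
    rhoZElem μ j k j' k' = 0 := by
  unfold rhoZElem
  rcases not_and_or.mp h1 with hj | hj <;> rcases not_and_or.mp h2 with hk | hk <;>
    simp [vacCoeff, hj, hk]

lemma rhoZ_diag_left (μ : ℝ) (hμ : 0 ≤ μ) :
    rhoZElem μ 0 2 0 2 = ((Real.exp (-μ) * μ^2 / 4 : ℝ) : ℂ) := by
  unfold rhoZElem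
  rw [intervalIntegral.integral_congr
        (g := fun _ : ℝ => ((Real.exp (-μ) * μ^2 / 4 : ℝ) : ℂ))
        (fun θ _ => by
          simp only [vacCoeff]
          norm_num
          rw [cc_conj _ _ (Real.sqrt_nonneg μ) 2, cc_eq _ _ (Real.sqrt_nonneg μ) 2]
          have hsq : Real.sqrt μ ^ 2 = μ := Real.sq_sqrt hμ
          have hf2 : Real.sqrt (Nat.factorial 2) * Real.sqrt (Nat.factorial 2) = 2 := by
            rw [Real.mul_self_sqrt (by positivity)]; norm_num
          have hexp : Complex.exp (Complex.I * (θ:ℂ) * (2:ℕ)) *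
              Complex.exp (-(Complex.I * (θ:ℂ) * (2:ℕ))) = 1 := by
            rw [← Complex.exp_add]; simp
          have hA : (Real.exp (-(Real.sqrt μ^2)/2) * Real.sqrt μ ^ 2 / Real.sqrt (Nat.factorial 2)) *
              (Real.exp (-(Real.sqrt μ^2)/2) * Real.sqrt μ ^ 2 / Real.sqrt (Nat.factorial 2))
              = Real.exp (-μ) * μ^2 / 2 := by
            rw [hsq]
            have he : Real.exp (-μ/2) * Real.exp (-μ/2) = Real.exp (-μ) := by
              rw [← Real.exp_add]; ring_nf
            rw [div_mul_div_comm, hf2]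
            linear_combination (μ*μ/2) * he
          have hAC := congrArg (fun x : ℝ => (x:ℂ)) hA
          push_cast at hAC
          linear_combination (norm := (push_cast; ring1))
            (((Real.exp (-(Real.sqrt μ^2)/2) * Real.sqrt μ ^ 2 / Real.sqrt (Nat.factorial 2) : ℝ):ℂ) *
              ((Real.exp (-(Real.sqrt μ^2)/2) * Real.sqrt μ ^ 2 / Real.sqrt (Nat.factorial 2) : ℝ):ℂ) / 2) * hexp
            + (1/2 : ℂ) * hAC),
      intervalIntegral.integral_const, sub_zero, Complex.real_smul]
  have hπ : (Real.pi : ℂ) ≠ 0 := by exact_mod_cast Real.pi_ne_zero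
  push_cast
  field_simp

lemma rhoZ_diag_right (μ : ℝ) (hμ : 0 ≤ μ) :
    rhoZElem μ 2 0 2 0 = ((Real.exp (-μ) * μ^2 / 4 : ℝ) : ℂ) := by
  unfold rhoZElem
  rw [intervalIntegral.integral_congr
        (g := fun _ : ℝ => ((Real.exp (-μ) * μ^2 / 4 : ℝ) : ℂ))
        (fun θ _ => by
          simp only [vacCoeff]
          norm_num
          rw [cc_conj _ _ (Real.sqrt_nonneg μ) 2, cc_eq _ _ (Real.sqrt_nonneg μ) 2]
          have hsq : Real.sqrt μ ^ 2 = μ := Real.sq_sqrt hμ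
          have hf2 : Real.sqrt (Nat.factorial 2) * Real.sqrt (Nat.factorial 2) = 2 := by
            rw [Real.mul_self_sqrt (by positivity)]; norm_num
          have hexp : Complex.exp (Complex.I * (θ:ℂ) * (2:ℕ)) *
              Complex.exp (-(Complex.I * (θ:ℂ) * (2:ℕ))) = 1 := by
            rw [← Complex.exp_add]; simp
          have hA : (Real.exp (-(Real.sqrt μ^2)/2) * Real.sqrt μ ^ 2 / Real.sqrt (Nat.factorial 2)) *
              (Real.exp (-(Real.sqrt μ^2)/2) * Real.sqrt μ ^ 2 / Real.sqrt (Nat.factorial 2))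
              = Real.exp (-μ) * μ^2 / 2 := by
            rw [hsq]
            have he : Real.exp (-μ/2) * Real.exp (-μ/2) = Real.exp (-μ) := by
              rw [← Real.exp_add]; ring_nf
            rw [div_mul_div_comm, hf2]
            linear_combination (μ*μ/2) * he
          have hAC := congrArg (fun x : ℝ => (x:ℂ)) hA
          push_cast at hAC
          linear_combination (norm := (push_cast; ring1))
            (((Real.exp (-(Real.sqrt μ^2)/2) * Real.sqrt μ ^ 2 / Real.sqrt (Nat.factorial 2) : ℝ):ℂ) *
              ((Real.exp (-(Real.sqrt μ^2)/2) * Real.sqrt μ ^ 2 / Real.sqrt (Nat.factorial 2) : ℝ):ℂ) / 2) * hexp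
            + (1/2 : ℂ) * hAC),
      intervalIntegral.integral_const, sub_zero, Complex.real_smul]
  have hπ : (Real.pi : ℂ) ≠ 0 := by exact_mod_cast Real.pi_ne_zero
  push_cast
  field_simp

lemma exp_I_pi_half_int (n : ℤ) :
    Complex.exp ((n:ℂ) * ((Real.pi:ℂ)/2 * Complex.I)) = Complex.I ^ n :=
  by rw [Complex.exp_int_mul, exp_pi_half]

lemma Ip0 : Complex.I ^ (0:ℤ) = 1 := by norm_num
lemma Ip1 : Complex.I ^ (1:ℤ) = Complex.I := by norm_num
lemma Ip2 : Complex.I ^ (2:ℤ) = -1 := by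
  rw [show (2:ℤ) = ((2:ℕ):ℤ) by norm_num, zpow_natCast]; simp [pow_succ, Complex.I_mul_I]
lemma Ip3 : Complex.I ^ (3:ℤ) = -Complex.I := by
  rw [show (3:ℤ) = ((3:ℕ):ℤ) by norm_num, zpow_natCast]; simp [pow_succ, Complex.I_mul_I]
lemma Ip4 : Complex.I ^ (4:ℤ) = 1 := by
  rw [show (4:ℤ) = ((4:ℕ):ℤ) by norm_num, zpow_natCast]; simp [pow_succ, Complex.I_mul_I]
lemma Ip6 : Complex.I ^ (6:ℤ) = -1 := by
  rw [show (6:ℤ) = ((6:ℕ):ℤ) by norm_num, zpow_natCast]; simp [pow_succ, Complex.I_mul_I]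
lemma Ipm1 : Complex.I ^ (-1:ℤ) = -Complex.I := by
  rw [show (-1:ℤ) = -((1:ℕ):ℤ) by norm_num, zpow_neg, zpow_natCast]
  simp [Complex.inv_I]
lemma Ipm2 : Complex.I ^ (-2:ℤ) = -1 := by
  rw [show (-2:ℤ) = -((2:ℕ):ℤ) by norm_num, zpow_neg, zpow_natCast]
  norm_num [pow_succ, Complex.I_mul_I]
lemma Ipm3 : Complex.I ^ (-3:ℤ) = Complex.I := by
  rw [show (-3:ℤ) = -((3:ℕ):ℤ) by norm_num, zpow_neg, zpow_natCast]
  simp [pow_succ, Complex.I_mul_I]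
lemma Ipm4 : Complex.I ^ (-4:ℤ) = 1 := by
  rw [show (-4:ℤ) = -((4:ℕ):ℤ) by norm_num, zpow_neg, zpow_natCast]
  simp [pow_succ, Complex.I_mul_I]
lemma Ipm6 : Complex.I ^ (-6:ℤ) = -1 := by
  rw [show (-6:ℤ) = -((6:ℕ):ℤ) by norm_num, zpow_neg, zpow_natCast]
  norm_num [pow_succ, Complex.I_mul_I]

lemma core (μ : ℝ) (hμ : 0 < μ) (ε : ℝ) (hε : ε * ε = 1) (j k j' k' : ℕ) :
    ((Real.exp (-μ) * μ ^ 2 / 2 : ℝ) : ℂ) *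
        (((1 / Real.sqrt 2 : ℝ):ℂ) *
          ((if j = 0 ∧ k = 2 then 1 else 0) + (ε:ℂ) * (if j = 2 ∧ k = 0 then 1 else 0))) *
        (((1 / Real.sqrt 2 : ℝ):ℂ) *
          ((if j' = 0 ∧ k' = 2 then 1 else 0) + (ε:ℂ) * (if j' = 2 ∧ k' = 0 then 1 else 0)))
      = projElem 2 j k *
          (rhoZElem μ j k j' k'
            + (ε:ℂ) * (((1:ℂ)/2) * rhoPhiElem μ 0 j k j' k' + ((1:ℂ)/2) * rhoPhiElem μ Real.pi j k j' k'
              - (((1:ℂ)/2) * rhoPhiElem μ (Real.pi/2) j k j' k'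
                  + ((1:ℂ)/2) * rhoPhiElem μ (3 * Real.pi/2) j k j' k'))) *
          projElem 2 j' k' := by
  by_cases h : j + k = 2
  · by_cases h' : j' + k' = 2
    swap
    · have c1 : ¬(j' = 0 ∧ k' = 2) := by omega
      have c2 : ¬(j' = 2 ∧ k' = 0) := by omega
      simp [projElem, h', c1, c2]
    have hj : j ≤ 2 := by omega
    have hk : k ≤ 2 := by omega
    have hj' : j' ≤ 2 := by omega
    have hk' : k' ≤ 2 := by omega
    have h2C : ((Real.sqrt 2:ℝ):ℂ) * ((Real.sqrt 2:ℝ):ℂ) = 2 := by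
      exact_mod_cast congrArg (fun x:ℝ => (x:ℂ)) (Real.mul_self_sqrt (by norm_num : (0:ℝ) ≤ 2))
    have hinv : ((((Real.sqrt 2:ℝ):ℂ))⁻¹ * (((Real.sqrt 2:ℝ):ℂ))⁻¹ : ℂ) = 1/2 := by
      rw [← mul_inv, h2C]; norm_num
    have hεC : (ε:ℂ) * (ε:ℂ) = 1 := by
      exact_mod_cast congrArg (fun x:ℝ => (x:ℂ)) hε
    interval_cases j <;> interval_cases k <;> interval_cases j' <;> interval_cases k' <;>
      try omega
    · rw [rhoZ_diag_left μ hμ.le,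
        rhoPhi_eq μ 0 hμ.le 0 2 0 2 (by norm_num) (by norm_num),
        rhoPhi_eq μ Real.pi hμ.le 0 2 0 2 (by norm_num) (by norm_num),
        rhoPhi_eq μ (Real.pi/2) hμ.le 0 2 0 2 (by norm_num) (by norm_num),
        rhoPhi_eq μ (3*Real.pi/2) hμ.le 0 2 0 2 (by norm_num) (by norm_num),
        show Complex.I * ((0:ℝ):ℂ) * (((2:ℕ):ℂ) - ((2:ℕ):ℂ)) = ((0:ℤ):ℂ) * ((Real.pi:ℂ)/2 * Complex.I) by push_cast; ring,
        show Complex.I * ((Real.pi:ℝ):ℂ) * (((2:ℕ):ℂ) - ((2:ℕ):ℂ)) = ((0:ℤ):ℂ) * ((Real.pi:ℂ)/2 * Complex.I) by push_cast; ring,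
        show Complex.I * ((Real.pi/2:ℝ):ℂ) * (((2:ℕ):ℂ) - ((2:ℕ):ℂ)) = ((0:ℤ):ℂ) * ((Real.pi:ℂ)/2 * Complex.I) by push_cast; ring,
        show Complex.I * ((3*Real.pi/2:ℝ):ℂ) * (((2:ℕ):ℂ) - ((2:ℕ):ℂ)) = ((0:ℤ):ℂ) * ((Real.pi:ℂ)/2 * Complex.I) by push_cast; ring]
      simp only [exp_I_pi_half_int, Ip0, Ip1, Ip2, Ip3, Ip4, Ip6, Ipm1, Ipm2, Ipm3, Ipm4, Ipm6]
      norm_num [projElem, Nat.factorial, Real.sqrt_one]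
      linear_combination (norm := (push_cast; ring1)) (((Real.exp (-μ):ℝ):ℂ) * ((μ:ℝ):ℂ)^2/2) * hinv
    · rw [rhoZ_zero_int μ 0 2 1 1 (by omega) (by omega),
        rhoPhi_eq μ 0 hμ.le 0 2 1 1 (by norm_num) (by norm_num),
        rhoPhi_eq μ Real.pi hμ.le 0 2 1 1 (by norm_num) (by norm_num),
        rhoPhi_eq μ (Real.pi/2) hμ.le 0 2 1 1 (by norm_num) (by norm_num),
        rhoPhi_eq μ (3*Real.pi/2) hμ.le 0 2 1 1 (by norm_num) (by norm_num),
        show Complex.I * ((0:ℝ):ℂ) * (((2:ℕ):ℂ) - ((1:ℕ):ℂ)) = ((0:ℤ):ℂ) * ((Real.pi:ℂ)/2 * Complex.I) by push_cast; ring,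
        show Complex.I * ((Real.pi:ℝ):ℂ) * (((2:ℕ):ℂ) - ((1:ℕ):ℂ)) = ((2:ℤ):ℂ) * ((Real.pi:ℂ)/2 * Complex.I) by push_cast; ring,
        show Complex.I * ((Real.pi/2:ℝ):ℂ) * (((2:ℕ):ℂ) - ((1:ℕ):ℂ)) = ((1:ℤ):ℂ) * ((Real.pi:ℂ)/2 * Complex.I) by push_cast; ring,
        show Complex.I * ((3*Real.pi/2:ℝ):ℂ) * (((2:ℕ):ℂ) - ((1:ℕ):ℂ)) = ((3:ℤ):ℂ) * ((Real.pi:ℂ)/2 * Complex.I) by push_cast; ring]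
      simp only [exp_I_pi_half_int, Ip0, Ip1, Ip2, Ip3, Ip4, Ip6, Ipm1, Ipm2, Ipm3, Ipm4, Ipm6]
      norm_num [projElem, Nat.factorial, Real.sqrt_one]
    · rw [rhoZ_zero_int μ 0 2 2 0 (by omega) (by omega),
        rhoPhi_eq μ 0 hμ.le 0 2 2 0 (by norm_num) (by norm_num),
        rhoPhi_eq μ Real.pi hμ.le 0 2 2 0 (by norm_num) (by norm_num),
        rhoPhi_eq μ (Real.pi/2) hμ.le 0 2 2 0 (by norm_num) (by norm_num),
        rhoPhi_eq μ (3*Real.pi/2) hμ.le 0 2 2 0 (by norm_num) (by norm_num),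
        show Complex.I * ((0:ℝ):ℂ) * (((2:ℕ):ℂ) - ((0:ℕ):ℂ)) = ((0:ℤ):ℂ) * ((Real.pi:ℂ)/2 * Complex.I) by push_cast; ring,
        show Complex.I * ((Real.pi:ℝ):ℂ) * (((2:ℕ):ℂ) - ((0:ℕ):ℂ)) = ((4:ℤ):ℂ) * ((Real.pi:ℂ)/2 * Complex.I) by push_cast; ring,
        show Complex.I * ((Real.pi/2:ℝ):ℂ) * (((2:ℕ):ℂ) - ((0:ℕ):ℂ)) = ((2:ℤ):ℂ) * ((Real.pi:ℂ)/2 * Complex.I) by push_cast; ring,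
        show Complex.I * ((3*Real.pi/2:ℝ):ℂ) * (((2:ℕ):ℂ) - ((0:ℕ):ℂ)) = ((6:ℤ):ℂ) * ((Real.pi:ℂ)/2 * Complex.I) by push_cast; ring]
      simp only [exp_I_pi_half_int, Ip0, Ip1, Ip2, Ip3, Ip4, Ip6, Ipm1, Ipm2, Ipm3, Ipm4, Ipm6]
      norm_num [projElem, Nat.factorial, Real.sqrt_one]
      linear_combination (norm := (push_cast; ring1)) ((((Real.exp (-μ):ℝ):ℂ) * ((μ:ℝ):ℂ)^2/2) * ((ε:ℝ):ℂ)) * hinv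
    · rw [rhoZ_zero_int μ 1 1 0 2 (by omega) (by omega),
        rhoPhi_eq μ 0 hμ.le 1 1 0 2 (by norm_num) (by norm_num),
        rhoPhi_eq μ Real.pi hμ.le 1 1 0 2 (by norm_num) (by norm_num),
        rhoPhi_eq μ (Real.pi/2) hμ.le 1 1 0 2 (by norm_num) (by norm_num),
        rhoPhi_eq μ (3*Real.pi/2) hμ.le 1 1 0 2 (by norm_num) (by norm_num),
        show Complex.I * ((0:ℝ):ℂ) * (((1:ℕ):ℂ) - ((2:ℕ):ℂ)) = ((0:ℤ):ℂ) * ((Real.pi:ℂ)/2 * Complex.I) by push_cast; ring,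
        show Complex.I * ((Real.pi:ℝ):ℂ) * (((1:ℕ):ℂ) - ((2:ℕ):ℂ)) = ((-2:ℤ):ℂ) * ((Real.pi:ℂ)/2 * Complex.I) by push_cast; ring,
        show Complex.I * ((Real.pi/2:ℝ):ℂ) * (((1:ℕ):ℂ) - ((2:ℕ):ℂ)) = ((-1:ℤ):ℂ) * ((Real.pi:ℂ)/2 * Complex.I) by push_cast; ring,
        show Complex.I * ((3*Real.pi/2:ℝ):ℂ) * (((1:ℕ):ℂ) - ((2:ℕ):ℂ)) = ((-3:ℤ):ℂ) * ((Real.pi:ℂ)/2 * Complex.I) by push_cast; ring]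
      simp only [exp_I_pi_half_int, Ip0, Ip1, Ip2, Ip3, Ip4, Ip6, Ipm1, Ipm2, Ipm3, Ipm4, Ipm6]
      norm_num [projElem, Nat.factorial, Real.sqrt_one]
    · rw [rhoZ_zero_int μ 1 1 1 1 (by omega) (by omega),
        rhoPhi_eq μ 0 hμ.le 1 1 1 1 (by norm_num) (by norm_num),
        rhoPhi_eq μ Real.pi hμ.le 1 1 1 1 (by norm_num) (by norm_num),
        rhoPhi_eq μ (Real.pi/2) hμ.le 1 1 1 1 (by norm_num) (by norm_num),
        rhoPhi_eq μ (3*Real.pi/2) hμ.le 1 1 1 1 (by norm_num) (by norm_num),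
        show Complex.I * ((0:ℝ):ℂ) * (((1:ℕ):ℂ) - ((1:ℕ):ℂ)) = ((0:ℤ):ℂ) * ((Real.pi:ℂ)/2 * Complex.I) by push_cast; ring,
        show Complex.I * ((Real.pi:ℝ):ℂ) * (((1:ℕ):ℂ) - ((1:ℕ):ℂ)) = ((0:ℤ):ℂ) * ((Real.pi:ℂ)/2 * Complex.I) by push_cast; ring,
        show Complex.I * ((Real.pi/2:ℝ):ℂ) * (((1:ℕ):ℂ) - ((1:ℕ):ℂ)) = ((0:ℤ):ℂ) * ((Real.pi:ℂ)/2 * Complex.I) by push_cast; ring,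
        show Complex.I * ((3*Real.pi/2:ℝ):ℂ) * (((1:ℕ):ℂ) - ((1:ℕ):ℂ)) = ((0:ℤ):ℂ) * ((Real.pi:ℂ)/2 * Complex.I) by push_cast; ring]
      simp only [exp_I_pi_half_int, Ip0, Ip1, Ip2, Ip3, Ip4, Ip6, Ipm1, Ipm2, Ipm3, Ipm4, Ipm6]
      norm_num [projElem, Nat.factorial, Real.sqrt_one]
    · rw [rhoZ_zero_int μ 1 1 2 0 (by omega) (by omega),
        rhoPhi_eq μ 0 hμ.le 1 1 2 0 (by norm_num) (by norm_num),
        rhoPhi_eq μ Real.pi hμ.le 1 1 2 0 (by norm_num) (by norm_num),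
        rhoPhi_eq μ (Real.pi/2) hμ.le 1 1 2 0 (by norm_num) (by norm_num),
        rhoPhi_eq μ (3*Real.pi/2) hμ.le 1 1 2 0 (by norm_num) (by norm_num),
        show Complex.I * ((0:ℝ):ℂ) * (((1:ℕ):ℂ) - ((0:ℕ):ℂ)) = ((0:ℤ):ℂ) * ((Real.pi:ℂ)/2 * Complex.I) by push_cast; ring,
        show Complex.I * ((Real.pi:ℝ):ℂ) * (((1:ℕ):ℂ) - ((0:ℕ):ℂ)) = ((2:ℤ):ℂ) * ((Real.pi:ℂ)/2 * Complex.I) by push_cast; ring,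
        show Complex.I * ((Real.pi/2:ℝ):ℂ) * (((1:ℕ):ℂ) - ((0:ℕ):ℂ)) = ((1:ℤ):ℂ) * ((Real.pi:ℂ)/2 * Complex.I) by push_cast; ring,
        show Complex.I * ((3*Real.pi/2:ℝ):ℂ) * (((1:ℕ):ℂ) - ((0:ℕ):ℂ)) = ((3:ℤ):ℂ) * ((Real.pi:ℂ)/2 * Complex.I) by push_cast; ring]
      simp only [exp_I_pi_half_int, Ip0, Ip1, Ip2, Ip3, Ip4, Ip6, Ipm1, Ipm2, Ipm3, Ipm4, Ipm6]
      norm_num [projElem, Nat.factorial, Real.sqrt_one]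
    · rw [rhoZ_zero_int μ 2 0 0 2 (by omega) (by omega),
        rhoPhi_eq μ 0 hμ.le 2 0 0 2 (by norm_num) (by norm_num),
        rhoPhi_eq μ Real.pi hμ.le 2 0 0 2 (by norm_num) (by norm_num),
        rhoPhi_eq μ (Real.pi/2) hμ.le 2 0 0 2 (by norm_num) (by norm_num),
        rhoPhi_eq μ (3*Real.pi/2) hμ.le 2 0 0 2 (by norm_num) (by norm_num),
        show Complex.I * ((0:ℝ):ℂ) * (((0:ℕ):ℂ) - ((2:ℕ):ℂ)) = ((0:ℤ):ℂ) * ((Real.pi:ℂ)/2 * Complex.I) by push_cast; ring,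
        show Complex.I * ((Real.pi:ℝ):ℂ) * (((0:ℕ):ℂ) - ((2:ℕ):ℂ)) = ((-4:ℤ):ℂ) * ((Real.pi:ℂ)/2 * Complex.I) by push_cast; ring,
        show Complex.I * ((Real.pi/2:ℝ):ℂ) * (((0:ℕ):ℂ) - ((2:ℕ):ℂ)) = ((-2:ℤ):ℂ) * ((Real.pi:ℂ)/2 * Complex.I) by push_cast; ring,
        show Complex.I * ((3*Real.pi/2:ℝ):ℂ) * (((0:ℕ):ℂ) - ((2:ℕ):ℂ)) = ((-6:ℤ):ℂ) * ((Real.pi:ℂ)/2 * Complex.I) by push_cast; ring]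
      simp only [exp_I_pi_half_int, Ip0, Ip1, Ip2, Ip3, Ip4, Ip6, Ipm1, Ipm2, Ipm3, Ipm4, Ipm6]
      norm_num [projElem, Nat.factorial, Real.sqrt_one]
      linear_combination (norm := (push_cast; ring1)) ((((Real.exp (-μ):ℝ):ℂ) * ((μ:ℝ):ℂ)^2/2) * ((ε:ℝ):ℂ)) * hinv
    · rw [rhoZ_zero_int μ 2 0 1 1 (by omega) (by omega),
        rhoPhi_eq μ 0 hμ.le 2 0 1 1 (by norm_num) (by norm_num),
        rhoPhi_eq μ Real.pi hμ.le 2 0 1 1 (by norm_num) (by norm_num),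
        rhoPhi_eq μ (Real.pi/2) hμ.le 2 0 1 1 (by norm_num) (by norm_num),
        rhoPhi_eq μ (3*Real.pi/2) hμ.le 2 0 1 1 (by norm_num) (by norm_num),
        show Complex.I * ((0:ℝ):ℂ) * (((0:ℕ):ℂ) - ((1:ℕ):ℂ)) = ((0:ℤ):ℂ) * ((Real.pi:ℂ)/2 * Complex.I) by push_cast; ring,
        show Complex.I * ((Real.pi:ℝ):ℂ) * (((0:ℕ):ℂ) - ((1:ℕ):ℂ)) = ((-2:ℤ):ℂ) * ((Real.pi:ℂ)/2 * Complex.I) by push_cast; ring,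
        show Complex.I * ((Real.pi/2:ℝ):ℂ) * (((0:ℕ):ℂ) - ((1:ℕ):ℂ)) = ((-1:ℤ):ℂ) * ((Real.pi:ℂ)/2 * Complex.I) by push_cast; ring,
        show Complex.I * ((3*Real.pi/2:ℝ):ℂ) * (((0:ℕ):ℂ) - ((1:ℕ):ℂ)) = ((-3:ℤ):ℂ) * ((Real.pi:ℂ)/2 * Complex.I) by push_cast; ring]
      simp only [exp_I_pi_half_int, Ip0, Ip1, Ip2, Ip3, Ip4, Ip6, Ipm1, Ipm2, Ipm3, Ipm4, Ipm6]
      norm_num [projElem, Nat.factorial, Real.sqrt_one]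
    · rw [rhoZ_diag_right μ hμ.le,
        rhoPhi_eq μ 0 hμ.le 2 0 2 0 (by norm_num) (by norm_num),
        rhoPhi_eq μ Real.pi hμ.le 2 0 2 0 (by norm_num) (by norm_num),
        rhoPhi_eq μ (Real.pi/2) hμ.le 2 0 2 0 (by norm_num) (by norm_num),
        rhoPhi_eq μ (3*Real.pi/2) hμ.le 2 0 2 0 (by norm_num) (by norm_num),
        show Complex.I * ((0:ℝ):ℂ) * (((0:ℕ):ℂ) - ((0:ℕ):ℂ)) = ((0:ℤ):ℂ) * ((Real.pi:ℂ)/2 * Complex.I) by push_cast; ring,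
        show Complex.I * ((Real.pi:ℝ):ℂ) * (((0:ℕ):ℂ) - ((0:ℕ):ℂ)) = ((0:ℤ):ℂ) * ((Real.pi:ℂ)/2 * Complex.I) by push_cast; ring,
        show Complex.I * ((Real.pi/2:ℝ):ℂ) * (((0:ℕ):ℂ) - ((0:ℕ):ℂ)) = ((0:ℤ):ℂ) * ((Real.pi:ℂ)/2 * Complex.I) by push_cast; ring,
        show Complex.I * ((3*Real.pi/2:ℝ):ℂ) * (((0:ℕ):ℂ) - ((0:ℕ):ℂ)) = ((0:ℤ):ℂ) * ((Real.pi:ℂ)/2 * Complex.I) by push_cast; ring]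
      simp only [exp_I_pi_half_int, Ip0, Ip1, Ip2, Ip3, Ip4, Ip6, Ipm1, Ipm2, Ipm3, Ipm4, Ipm6]
      norm_num [projElem, Nat.factorial, Real.sqrt_one]
      linear_combination (norm := (push_cast; ring1)) ((((Real.exp (-μ):ℝ):ℂ) * ((μ:ℝ):ℂ)^2/2) * (((Real.sqrt 2:ℝ):ℂ))⁻¹ * (((Real.sqrt 2:ℝ):ℂ))⁻¹) * hεC + (((Real.exp (-μ):ℝ):ℂ) * ((μ:ℝ):ℂ)^2/2) * hinv
  · have c1 : ¬(j = 0 ∧ k = 2) := by omega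
    have c2 : ¬(j = 2 ∧ k = 0) := by omega
    simp [projElem, h, c1, c2]


/-- Decoy decomposition of the two-photon cat states:
`Pr_μ(2)|Ψ₂^±⟩⟨Ψ₂^±| = P₂[ρ_μ^Z ± (½ρ_μ^0 + ½ρ_μ^π) ∓ (½ρ_μ^{π/2} + ½ρ_μ^{3π/2})]P₂`,
as equalities of Fock-basis matrix elements. -/
theorem two_photon_decoy_decomposition (μ : ℝ) (hμ : 0 < μ) (j k j' k' : ℕ) :
    ((Real.exp (-μ) * μ ^ 2 / 2 : ℝ) : ℂ) * psi2Plus j k * (starRingEnd ℂ) (psi2Plus j' k')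
      = projElem 2 j k *
          (rhoZElem μ j k j' k'
            + (((1:ℂ)/2) * rhoPhiElem μ 0 j k j' k' + ((1:ℂ)/2) * rhoPhiElem μ Real.pi j k j' k')
            - (((1:ℂ)/2) * rhoPhiElem μ (Real.pi/2) j k j' k'
                + ((1:ℂ)/2) * rhoPhiElem μ (3 * Real.pi/2) j k j' k')) *
          projElem 2 j' k'
    ∧ ((Real.exp (-μ) * μ ^ 2 / 2 : ℝ) : ℂ) * psi2Minus j k * (starRingEnd ℂ) (psi2Minus j' k')
      = projElem 2 j k *
          (rhoZElem μ j k j' k'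
            - (((1:ℂ)/2) * rhoPhiElem μ 0 j k j' k' + ((1:ℂ)/2) * rhoPhiElem μ Real.pi j k j' k')
            + (((1:ℂ)/2) * rhoPhiElem μ (Real.pi/2) j k j' k'
                + ((1:ℂ)/2) * rhoPhiElem μ (3 * Real.pi/2) j k j' k')) *
          projElem 2 j' k' := by
  constructor
  · have hc := core μ hμ 1 (by norm_num) j k j' k'
    simp only [psi2Plus, map_mul, map_add, map_sub, Complex.conj_ofReal,
      apply_ite (starRingEnd ℂ), map_one, map_zero]
    linear_combination (norm := (push_cast; ring1)) hc
  · have hc := core μ hμ (-1) (by norm_num) j k j' k'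
    simp only [psi2Minus, map_mul, map_add, map_sub, Complex.conj_ofReal,
      apply_ite (starRingEnd ℂ), map_one, map_zero]
    linear_combination (norm := (push_cast; ring1)) hc
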